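/- arXiv:1910.03669 — 5 statements merged into one kernel-verified Lean document; each statement's English description precedes it below -/
import Mathlib

section
/- For every λ > 0 there exists a number α₁*(λ) with 0 < α₁*(λ) < 1 such that for all α with 0 < α < α₁*(λ) one has exp(−λ/2) · Σ_{k=0}^∞ (λ/2)^k/k! · (1 − (1−α)^{2k+1}) > exp(−2λ) · Σ_{k=0}^∞ (2λ)^k/k! · [Γ(k + 3/2)/(Γ(1/2)·k!)] · ∫_0^{α²} b^{−1/2}(1−b)^k db, with equality when α = α₁*(λ). (This is the statement π_α(λ;1,2) > π_α(4λ;2,1) of Proposition 4.3 for l = 1, i.e. the power of the size-α univariate t²-test with 2 denominator degrees of freedom at noncentrality λ exceeds the power of the size-α bivariate T²-test at noncentrality 4λ.) -/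
open Real

/-- Power of the size-`α` univariate `t²`-test (`m = 1`, `n = 2`) at noncentrality `lam`:
`π_α(λ;1,2) = e^{-λ/2} Σ (λ/2)^k/k! · (1 - (1-α)^{2k+1})`. -/
noncomputable def pow12 (lam α : ℝ) : ℝ :=
  Real.exp (-lam / 2) *
    ∑' k : ℕ, (lam / 2) ^ k / (Nat.factorial k : ℝ) * (1 - (1 - α) ^ (2 * k + 1))

/-- Power of the size-`α` bivariate `T²`-test (`m = 2`, `n = 1`) at noncentrality `4·lam`:
`π_α(4λ;2,1) = e^{-2λ} Σ (2λ)^k/k! · [Γ(k+3/2)/(Γ(1/2)k!)] ∫_0^{α²} b^{-1/2}(1-b)^k db`. -/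
noncomputable def pow21 (lam α : ℝ) : ℝ :=
  Real.exp (-2 * lam) *
    ∑' k : ℕ, (2 * lam) ^ k / (Nat.factorial k : ℝ) *
      (Real.Gamma ((k : ℝ) + 3 / 2) / (Real.Gamma (1 / 2) * (Nat.factorial k : ℝ))) *
      ∫ b in (0 : ℝ)..(α ^ 2), b ^ (-(1 / 2) : ℝ) * (1 - b) ^ k


open MeasureTheory intervalIntegral


lemma exp_tsum (x : ℝ) : ∑' k : ℕ, x ^ k / (Nat.factorial k : ℝ) = Real.exp x := by
  rw [Real.exp_eq_exp_ℝ, NormedSpace.exp_eq_tsum_div]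

lemma summable_sq {x : ℝ} (hx : 0 ≤ x) :
    Summable (fun k : ℕ => ((k : ℝ) + 1) ^ 2 * x ^ k / (Nat.factorial k : ℝ)) := by
  apply summable_of_ratio_norm_eventually_le (r := 1/2) (by norm_num)
  filter_upwards [Filter.eventually_ge_atTop (Nat.ceil (8 * x))] with k hk
  have hk' : 8 * x ≤ (k : ℝ) := le_trans (Nat.le_ceil _) (by exact_mod_cast hk)
  have h1 : (0:ℝ) < (Nat.factorial k : ℝ) := by positivity
  have h2 : (Nat.factorial (k+1) : ℝ) = ((k:ℝ)+1) * (Nat.factorial k) := by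
    push_cast [Nat.factorial_succ]; ring
  have h4 : ((k:ℝ)+2)^2 ≤ 4 * ((k:ℝ)+1)^2 := by nlinarith [Nat.cast_nonneg (α := ℝ) k]
  have hxle : x ≤ ((k:ℝ)+1)/8 := by linarith
  have m1 : ((k:ℝ)+2)^2 * x ≤ 1/2*((k:ℝ)+1)^3 := by
    nlinarith [mul_le_mul_of_nonneg_left hxle (by positivity : (0:ℝ) ≤ 4*((k:ℝ)+1)^2),
      mul_le_mul_of_nonneg_right h4 hx]
  have m2 := mul_le_mul_of_nonneg_right m1
    (show (0:ℝ) ≤ x^k * (Nat.factorial k : ℝ) by positivity)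
  rw [Real.norm_eq_abs, Real.norm_eq_abs, abs_of_nonneg (by positivity),
    abs_of_nonneg (by positivity)]
  push_cast
  rw [h2]
  rw [show (1:ℝ)/2 * ((((k:ℝ)+1))^2 * x^k / ↑(Nat.factorial k))
      = ((k:ℝ)+1)^2*x^k/(2*↑(Nat.factorial k)) by ring]
  rw [div_le_div_iff₀ (by positivity) (by positivity), pow_succ x k]
  nlinarith [m2]

lemma summable_aux {x : ℝ} (hx : 0 ≤ x) {f : ℕ → ℝ}
    (hf : ∀ k, |f k| ≤ ((k : ℝ) + 1) ^ 2) :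
    Summable (fun k : ℕ => x ^ k / (Nat.factorial k : ℝ) * f k) := by
  apply Summable.of_abs
  apply Summable.of_nonneg_of_le (fun k => abs_nonneg _) _ (summable_sq hx)
  intro k
  rw [abs_mul, abs_of_nonneg (by positivity : (0:ℝ) ≤ x ^ k / (Nat.factorial k : ℝ))]
  calc x ^ k / (Nat.factorial k : ℝ) * |f k| ≤ x ^ k / (Nat.factorial k : ℝ) * (((k:ℝ)+1)^2) := by
        apply mul_le_mul_of_nonneg_left (hf k) (by positivity)
    _ = ((k:ℝ)+1)^2 * x ^ k / (Nat.factorial k : ℝ) := by ring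

lemma tsum_mul_k {x : ℝ} (hx : 0 ≤ x) :
    ∑' k : ℕ, x ^ k / (Nat.factorial k : ℝ) * (k : ℝ) = x * Real.exp x := by
  have hs : Summable (fun k : ℕ => x ^ k / (Nat.factorial k : ℝ) * (k : ℝ)) := by
    apply summable_aux hx
    intro k
    rw [abs_of_nonneg (Nat.cast_nonneg k)]
    nlinarith [Nat.cast_nonneg (α := ℝ) k]
  rw [Summable.tsum_eq_zero_add hs]
  simp only [Nat.cast_zero, mul_zero, zero_add, pow_zero]
  have key : ∀ k : ℕ, x ^ (k+1) / (Nat.factorial (k+1) : ℝ) * ((k+1 : ℕ) : ℝ)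
      = x * (x ^ k / (Nat.factorial k : ℝ)) := by
    intro k
    have h2 : (Nat.factorial (k+1) : ℝ) = ((k:ℝ)+1) * (Nat.factorial k) := by
      push_cast [Nat.factorial_succ]; ring
    have h3 : (0:ℝ) < (Nat.factorial k : ℝ) := by positivity
    rw [h2, pow_succ x k]
    push_cast
    field_simp
  rw [tsum_congr key, tsum_mul_left, exp_tsum]



noncomputable def cc (k : ℕ) : ℝ :=
  Real.Gamma ((k : ℝ) + 3 / 2) / (Real.Gamma (1 / 2) * (Nat.factorial k : ℝ))

lemma Gamma_half_pos : 0 < Real.Gamma (1 / 2) := Real.Gamma_pos_of_pos (by norm_num)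

lemma cc_zero : cc 0 = 1 / 2 := by
  unfold cc
  rw [show ((0:ℕ):ℝ) + 3/2 = 1/2 + 1 by norm_num, Real.Gamma_add_one (by norm_num)]
  have h := Gamma_half_pos
  simp [Nat.factorial]
  field_simp

lemma cc_succ (k : ℕ) : cc (k + 1) = cc k * ((2 * (k:ℝ) + 3) / (2 * ((k:ℝ) + 1))) := by
  unfold cc
  have h1 : ((k+1 : ℕ):ℝ) + 3/2 = ((k:ℝ) + 3/2) + 1 := by push_cast; ring
  rw [h1, Real.Gamma_add_one (by positivity)]
  have h2 : (Nat.factorial (k+1) : ℝ) = ((k:ℝ)+1) * (Nat.factorial k) := by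
    push_cast [Nat.factorial_succ]; ring
  rw [h2]
  have h3 : (0:ℝ) < (Nat.factorial k : ℝ) := by positivity
  have h4 := Gamma_half_pos
  field_simp

lemma cc_pos (k : ℕ) : 0 < cc k := by
  unfold cc
  have : (0:ℝ) < (k:ℝ) + 3/2 := by positivity
  have h3 : (0:ℝ) < (Nat.factorial k : ℝ) := by positivity
  exact div_pos (Real.Gamma_pos_of_pos this) (mul_pos Gamma_half_pos h3)

lemma cc_le (k : ℕ) : cc k ≤ ((k:ℝ) + 2) / 4 := by
  induction k with
  | zero => rw [cc_zero]; norm_num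
  | succ n ih =>
      rw [cc_succ]
      have h1 : (0:ℝ) < 2 * ((n:ℝ)+1) := by positivity
      have h2 : (0:ℝ) ≤ (2*(n:ℝ)+3) / (2*((n:ℝ)+1)) := by positivity
      calc cc n * ((2*(n:ℝ)+3) / (2*((n:ℝ)+1)))
          ≤ (((n:ℝ)+2)/4) * ((2*(n:ℝ)+3) / (2*((n:ℝ)+1))) := by
            exact mul_le_mul_of_nonneg_right ih h2
        _ ≤ (((n+1:ℕ):ℝ) + 2) / 4 := by
            push_cast
            rw [div_mul_div_comm, div_le_div_iff₀ (by positivity) (by norm_num)]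
            nlinarith [Nat.cast_nonneg (α := ℝ) n]

lemma cc_two : cc 2 = 15 / 16 := by
  have h0 := cc_zero
  have h1 := cc_succ 0
  have h2 := cc_succ 1
  rw [h1, h0] at h2
  rw [h2]
  norm_num

lemma beta_id (k : ℕ) :
    cc k * ∫ b in (0:ℝ)..1, b ^ (-(1/2) : ℝ) * (1 - b) ^ k = 1 := by
  have hs : (0:ℝ) < (1/2 : ℂ).re := by norm_num
  have ht : (0:ℝ) < ((k:ℂ) + 1).re := by
    simp [Complex.add_re]
    positivity
  have h := Complex.Gamma_mul_Gamma_eq_betaIntegral hs ht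
  have hbeta : Complex.betaIntegral (1/2) ((k:ℂ)+1)
      = ((∫ b in (0:ℝ)..1, b ^ (-(1/2) : ℝ) * (1 - b) ^ k : ℝ) : ℂ) := by
    rw [Complex.betaIntegral]
    rw [← intervalIntegral.integral_ofReal]
    apply intervalIntegral.integral_congr
    intro x hx
    beta_reduce
    rw [Set.uIcc_of_le (by norm_num : (0:ℝ) ≤ 1)] at hx
    have hx0 : 0 ≤ x := hx.1
    have e1 : (1/2 : ℂ) - 1 = ((-(1/2) : ℝ) : ℂ) := by norm_num
    have e2 : ((k:ℂ) + 1) - 1 = ((k : ℕ) : ℂ) := by push_cast; ring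
    rw [e1, e2, ← Complex.ofReal_cpow hx0, Complex.cpow_natCast,
      show (1 : ℂ) - (x:ℂ) = ((1 - x : ℝ) : ℂ) by push_cast; ring,
      ← Complex.ofReal_pow, ← Complex.ofReal_mul]
  have hg1 : Complex.Gamma (1/2) = (Real.Gamma (1/2) : ℂ) := by
    rw [show (1/2 : ℂ) = ((1/2 : ℝ) : ℂ) by norm_num, Complex.Gamma_ofReal]
  have hg2 : Complex.Gamma ((k:ℂ)+1) = ((Nat.factorial k : ℝ) : ℂ) := by
    rw [Complex.Gamma_nat_eq_factorial]
    norm_num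
  have hg3 : Complex.Gamma (1/2 + ((k:ℂ)+1)) = ((Real.Gamma ((k:ℝ) + 3/2) : ℝ) : ℂ) := by
    rw [show (1/2 : ℂ) + ((k:ℂ)+1) = (((k:ℝ) + 3/2 : ℝ) : ℂ) by push_cast; ring,
      Complex.Gamma_ofReal]
  rw [hbeta, hg1, hg2, hg3] at h
  have hre : Real.Gamma (1/2) * (Nat.factorial k : ℝ)
      = Real.Gamma ((k:ℝ) + 3/2) * ∫ b in (0:ℝ)..1, b ^ (-(1/2) : ℝ) * (1 - b) ^ k := by
    exact_mod_cast h
  unfold cc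
  have hG : (0:ℝ) < Real.Gamma ((k:ℝ) + 3/2) := Real.Gamma_pos_of_pos (by positivity)
  have h3 : (0:ℝ) < (Nat.factorial k : ℝ) := by positivity
  have h4 := Gamma_half_pos
  rw [div_mul_eq_mul_div, ← hre]
  field_simp


noncomputable def gg (k : ℕ) (b : ℝ) : ℝ := b ^ (-(1/2) : ℝ) * (1 - b) ^ k

noncomputable def II (k : ℕ) (t : ℝ) : ℝ := ∫ b in (0:ℝ)..t, gg k b

lemma gg_intable (k : ℕ) (a b : ℝ) : IntervalIntegrable (gg k) volume a b := by
  apply IntervalIntegrable.mul_continuousOn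
  · exact intervalIntegral.intervalIntegrable_rpow' (by norm_num)
  · exact (Continuous.continuousOn (by continuity))

lemma II_nonneg {k : ℕ} {t : ℝ} (h0 : 0 ≤ t) (h1 : t ≤ 1) : 0 ≤ II k t := by
  apply intervalIntegral.integral_nonneg h0
  intro u hu
  unfold gg
  have : 0 ≤ 1 - u := by linarith [hu.2]
  exact mul_nonneg (Real.rpow_nonneg hu.1 _) (pow_nonneg this k)

lemma sq_rpow_half {α : ℝ} (h0 : 0 ≤ α) : (α^2) ^ ((1/2 : ℝ)) = α := by
  rw [show (1/2 : ℝ) = (((2:ℕ) : ℝ))⁻¹ by norm_num]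
  exact Real.pow_rpow_inv_natCast h0 (by norm_num)

lemma II_le_two_mul {k : ℕ} {α : ℝ} (h0 : 0 ≤ α) (h1 : α ≤ 1) : II k (α^2) ≤ 2 * α := by
  have hsq : α^2 ≤ 1 := by nlinarith
  have hsq0 : 0 ≤ α^2 := sq_nonneg α
  have step1 : II k (α^2) ≤ ∫ b in (0:ℝ)..(α^2), b ^ (-(1/2) : ℝ) := by
    apply intervalIntegral.integral_mono_on hsq0 (gg_intable k 0 (α^2))
      (intervalIntegral.intervalIntegrable_rpow' (by norm_num))
    intro u hu
    unfold gg
    have hu1 : u ≤ 1 := le_trans hu.2 hsq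
    have h2 : (1 - u) ^ k ≤ 1 :=
      pow_le_one₀ (by linarith) (by linarith [hu.1])
    have h3 : (0:ℝ) ≤ u ^ (-(1/2) : ℝ) := Real.rpow_nonneg hu.1 _
    nlinarith
  have step2 : ∫ b in (0:ℝ)..(α^2), b ^ (-(1/2) : ℝ) = 2 * α := by
    rw [integral_rpow (Or.inl (by norm_num))]
    rw [show -(1/2 : ℝ) + 1 = 1/2 by norm_num, sq_rpow_half h0,
      Real.zero_rpow (by norm_num)]
    ring
  linarith

lemma II_split {k : ℕ} (α : ℝ) :
    II k 1 - II k (α^2) = ∫ b in (α^2)..(1:ℝ), gg k b := by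
  have h := intervalIntegral.integral_add_adjacent_intervals
    (gg_intable k 0 (α^2)) (gg_intable k (α^2) 1)
  unfold II
  linarith [h]

lemma tail_le {k : ℕ} {α : ℝ} (h0 : 0 < α) (h1 : α ≤ 1) :
    ∫ b in (α^2)..(1:ℝ), gg k b ≤ (1/α) * (1 - α^2) ^ (k+1) / (k+1) := by
  have hsq : α^2 ≤ 1 := by nlinarith
  have hsq0 : 0 < α^2 := by positivity
  have hbound : ∀ b ∈ Set.Icc (α^2) 1, gg k b ≤ (1/α) * (1-b)^k := by
    intro b hb
    unfold gg
    have hb1 : b ^ (-(1/2) : ℝ) ≤ (α^2) ^ (-(1/2) : ℝ) :=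
      Real.rpow_le_rpow_of_nonpos hsq0 hb.1 (by norm_num)
    have hb2 : (α^2) ^ (-(1/2) : ℝ) = 1/α := by
      rw [Real.rpow_neg (le_of_lt hsq0), sq_rpow_half h0.le]
      field_simp
    have hb3 : (0:ℝ) ≤ (1-b)^k := by
      have : 0 ≤ 1 - b := by linarith [hb.2]
      positivity
    calc b ^ (-(1/2) : ℝ) * (1-b)^k ≤ (α^2) ^ (-(1/2) : ℝ) * (1-b)^k :=
          mul_le_mul_of_nonneg_right hb1 hb3
      _ = (1/α) * (1-b)^k := by rw [hb2]
  have hcont : Continuous (fun b : ℝ => (1/α) * (1-b)^k) := by continuity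
  have step1 : ∫ b in (α^2)..(1:ℝ), gg k b ≤ ∫ b in (α^2)..(1:ℝ), (1/α) * (1-b)^k :=
    intervalIntegral.integral_mono_on hsq (gg_intable k _ _)
      (hcont.intervalIntegrable _ _) hbound
  have step2 : ∫ b in (α^2)..(1:ℝ), (1/α) * (1-b)^k
      = (1/α) * ((1 - α^2) ^ (k+1) / (k+1)) := by
    rw [intervalIntegral.integral_const_mul]
    congr 1
    have h3 := intervalIntegral.integral_comp_sub_left (a := α^2) (b := (1:ℝ))
      (fun y : ℝ => y ^ k) 1
    rw [h3]
    simp only [sub_self]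
    rw [integral_pow]
    norm_num
  rw [step2] at step1
  calc ∫ b in (α^2)..(1:ℝ), gg k b ≤ (1/α) * ((1 - α^2) ^ (k+1) / (k+1)) := step1
    _ = (1/α) * (1 - α^2) ^ (k+1) / (k+1) := by ring

lemma II_contOn (k : ℕ) : ContinuousOn (fun α : ℝ => II k (α^2)) (Set.Icc 0 1) := by
  have hprim : ContinuousOn (fun t : ℝ => II k t) (Set.uIcc 0 1) := by
    unfold II
    exact intervalIntegral.continuousOn_primitive_interval'
      (gg_intable k 0 1) Set.left_mem_uIcc
  rw [Set.uIcc_of_le (by norm_num : (0:ℝ) ≤ 1)] at hprim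
  apply hprim.comp (Continuous.continuousOn (by continuity))
  intro α hα
  have h2 : α^2 ≤ 1 := by nlinarith [hα.1, hα.2]
  exact ⟨sq_nonneg α, h2⟩
lemma pow_one_sub_le (n : ℕ) {t : ℝ} (h0 : 0 ≤ t) (h1 : t ≤ 1) :
    (1 - t) ^ n ≤ 1 - (n:ℝ) * t + ((n:ℝ) * ((n:ℝ) - 1)) / 2 * t ^ 2 := by
  induction n with
  | zero => norm_num
  | succ n ih =>
      have ht : 0 ≤ 1 - t := by linarith
      have key := mul_le_mul_of_nonneg_right ih ht
      have e : (1 - t) ^ (n+1) = (1 - t) ^ n * (1 - t) := pow_succ _ _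
      have hc : 0 ≤ (n:ℝ) * ((n:ℝ) - 1) := by
        rcases Nat.eq_zero_or_pos n with h | h
        · simp [h]
        · have : (1:ℝ) ≤ (n:ℝ) := by exact_mod_cast h
          nlinarith
      have ht3 : 0 ≤ t^3 := by positivity
      push_cast
      nlinarith [mul_nonneg hc ht3]

-- summability of the pow12 series building blocks
lemma summable_12 {x : ℝ} (hx : 0 ≤ x) {α : ℝ} (h0 : 0 ≤ α) (h1 : α ≤ 1) :
    Summable (fun k : ℕ => x ^ k / (Nat.factorial k : ℝ) * (1 - (1-α) ^ (2*k+1))) := by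
  apply summable_aux hx
  intro k
  have hb : 0 ≤ (1-α) ^ (2*k+1) := pow_nonneg (by linarith) _
  have hb2 : (1-α) ^ (2*k+1) ≤ 1 := pow_le_one₀ (by linarith) (by linarith)
  rw [abs_of_nonneg (by linarith)]
  nlinarith [Nat.cast_nonneg (α := ℝ) k]

lemma summable_c {x : ℝ} (hx : 0 ≤ x) {f : ℕ → ℝ}
    (hf : ∀ k, |f k| ≤ ((k:ℝ) + 1)) :
    Summable (fun k : ℕ => x ^ k / (Nat.factorial k : ℝ) * f k) := by
  apply summable_aux hx
  intro k
  refine (hf k).trans ?_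
  nlinarith [Nat.cast_nonneg (α := ℝ) k]

lemma tsum_2k1 {x : ℝ} (hx : 0 ≤ x) :
    ∑' k : ℕ, x ^ k / (Nat.factorial k : ℝ) * (2*(k:ℝ)+1) = (2*x+1) * Real.exp x := by
  have h1 : Summable (fun k : ℕ => x ^ k / (Nat.factorial k : ℝ) * (k:ℝ)) := by
    apply summable_c hx; intro k; rw [abs_of_nonneg (Nat.cast_nonneg k)]; linarith
  have h2 : Summable (fun k : ℕ => x ^ k / (Nat.factorial k : ℝ)) := by
    have := summable_c hx (f := fun _ => (1:ℝ))
      (by intro k; rw [abs_one]; linarith [Nat.cast_nonneg (α := ℝ) k])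
    simpa using this
  have e : ∀ k : ℕ, x ^ k / (Nat.factorial k : ℝ) * (2*(k:ℝ)+1)
      = 2 * (x ^ k / (Nat.factorial k : ℝ) * (k:ℝ)) + x ^ k / (Nat.factorial k : ℝ) := by
    intro k; ring
  rw [tsum_congr e, Summable.tsum_add (h1.mul_left 2) h2, tsum_mul_left,
    tsum_mul_k hx, exp_tsum]
  ring


lemma summable_aux' {x : ℝ} (hx : 0 ≤ x) {f : ℕ → ℝ}
    (hf : ∀ k, |f k| ≤ 3 * ((k : ℝ) + 1) ^ 2) :
    Summable (fun k : ℕ => x ^ k / (Nat.factorial k : ℝ) * f k) := by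
  apply Summable.of_abs
  apply Summable.of_nonneg_of_le (fun k => abs_nonneg _) _ ((summable_sq hx).mul_left 3)
  intro k
  rw [abs_mul, abs_of_nonneg (by positivity : (0:ℝ) ≤ x ^ k / (Nat.factorial k : ℝ))]
  calc x ^ k / (Nat.factorial k : ℝ) * |f k|
      ≤ x ^ k / (Nat.factorial k : ℝ) * (3 * ((k:ℝ)+1)^2) :=
        mul_le_mul_of_nonneg_left (hf k) (by positivity)
    _ = 3 * (((k:ℝ)+1)^2 * x ^ k / (Nat.factorial k : ℝ)) := by ring

noncomputable def DD (lam : ℝ) : ℝ :=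
  Real.exp (-lam/2) * ∑' k : ℕ, (lam/2)^k/(Nat.factorial k : ℝ) * ((k:ℝ)*(2*(k:ℝ)+1))

noncomputable def QQ (lam : ℝ) : ℝ :=
  Real.exp (-2*lam) * ∑' k : ℕ, (2*lam)^k/(Nat.factorial k : ℝ) * (2 * cc k)

lemma summable_k2k1 {x : ℝ} (hx : 0 ≤ x) :
    Summable (fun k : ℕ => x^k/(Nat.factorial k : ℝ) * ((k:ℝ)*(2*(k:ℝ)+1))) := by
  apply summable_aux' hx
  intro k
  rw [abs_of_nonneg (by positivity)]
  nlinarith [Nat.cast_nonneg (α := ℝ) k]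

lemma DD_nonneg {lam : ℝ} (hl : 0 ≤ lam) : 0 ≤ DD lam := by
  unfold DD
  apply mul_nonneg (Real.exp_nonneg _)
  apply tsum_nonneg
  intro k
  have hx : (0:ℝ) ≤ lam/2 := by linarith
  positivity

lemma pow12_lower {lam α : ℝ} (hl : 0 ≤ lam) (h0 : 0 ≤ α) (h1 : α ≤ 1) :
    (1+lam)*α - DD lam * α^2 ≤ pow12 lam α := by
  set x := lam/2 with hxdef
  have hx : 0 ≤ x := by simp [hxdef]; linarith
  have hsum1 : Summable (fun k : ℕ => x^k/(Nat.factorial k : ℝ) * (2*(k:ℝ)+1)) := by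
    apply summable_aux' hx
    intro k
    rw [abs_of_nonneg (by positivity)]
    nlinarith [Nat.cast_nonneg (α := ℝ) k]
  have hsum2 := summable_k2k1 hx
  have hterm : ∀ k : ℕ,
      x^k/(Nat.factorial k : ℝ) * ((2*(k:ℝ)+1)*α) - x^k/(Nat.factorial k : ℝ) * (((k:ℝ)*(2*(k:ℝ)+1))*α^2)
        ≤ x^k/(Nat.factorial k : ℝ) * (1 - (1-α)^(2*k+1)) := by
    intro k
    have hp := pow_one_sub_le (2*k+1) h0 h1
    have hfac : (0:ℝ) ≤ x^k/(Nat.factorial k : ℝ) := by positivity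
    have hcast : ((2*k+1 : ℕ) : ℝ) = 2*(k:ℝ)+1 := by push_cast; ring
    rw [hcast] at hp
    have hineq : (2*(k:ℝ)+1)*α - ((k:ℝ)*(2*(k:ℝ)+1))*α^2 ≤ 1 - (1-α)^(2*k+1) := by
      nlinarith [hp]
    nlinarith [mul_le_mul_of_nonneg_left hineq hfac]
  have hsumL : Summable (fun k : ℕ =>
      x^k/(Nat.factorial k : ℝ) * ((2*(k:ℝ)+1)*α) - x^k/(Nat.factorial k : ℝ) * (((k:ℝ)*(2*(k:ℝ)+1))*α^2)) := by
    apply Summable.sub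
    · have := (hsum1.mul_right α)
      simpa [mul_assoc] using this
    · have := (hsum2.mul_right (α^2))
      simpa [mul_assoc] using this
  have hsumR := summable_12 hx h0 h1
  have hts := Summable.tsum_le_tsum hterm hsumL hsumR
  have hL : ∑' k : ℕ, (x^k/(Nat.factorial k : ℝ) * ((2*(k:ℝ)+1)*α)
        - x^k/(Nat.factorial k : ℝ) * (((k:ℝ)*(2*(k:ℝ)+1))*α^2))
      = α * ((2*x+1) * Real.exp x) - α^2 * ∑' k : ℕ, x^k/(Nat.factorial k : ℝ) * ((k:ℝ)*(2*(k:ℝ)+1)) := by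
    rw [Summable.tsum_sub (by have := (hsum1.mul_right α); simpa [mul_assoc] using this)
        (by have := (hsum2.mul_right (α^2)); simpa [mul_assoc] using this)]
    congr 1
    · rw [← tsum_2k1 hx, ← tsum_mul_left]
      apply tsum_congr; intro k; ring
    · rw [← tsum_mul_left]
      apply tsum_congr; intro k; ring
  rw [hL] at hts
  unfold pow12
  have hexp : Real.exp (-lam/2) * Real.exp x = 1 := by
    rw [← Real.exp_add, show -lam/2 + x = (0:ℝ) by rw [hxdef]; ring, Real.exp_zero]
  have hepos : 0 < Real.exp (-lam/2) := Real.exp_pos _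
  have := mul_le_mul_of_nonneg_left hts hepos.le
  calc (1+lam)*α - DD lam * α^2
      = Real.exp (-lam/2) * (α * ((2*x+1) * Real.exp x))
        - Real.exp (-lam/2) * (α^2 * ∑' k : ℕ, x^k/(Nat.factorial k : ℝ) * ((k:ℝ)*(2*(k:ℝ)+1))) := by
        unfold DD
        rw [show Real.exp (-lam/2) * (α * ((2*x+1) * Real.exp x))
            = (Real.exp (-lam/2) * Real.exp x) * ((2*x+1) * α) by ring, hexp]
        simp only [hxdef]
        ring
    _ = Real.exp (-lam/2) * (α * ((2*x+1) * Real.exp x)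
        - α^2 * ∑' k : ℕ, x^k/(Nat.factorial k : ℝ) * ((k:ℝ)*(2*(k:ℝ)+1))) := by ring
    _ ≤ Real.exp (-lam/2) * ∑' k : ℕ, x^k/(Nat.factorial k : ℝ) * (1 - (1-α)^(2*k+1)) := this

lemma pow21_term_eq (lam α : ℝ) :
    pow21 lam α = Real.exp (-2*lam) *
      ∑' k : ℕ, (2*lam)^k/(Nat.factorial k : ℝ) * (cc k * II k (α^2)) := by
  unfold pow21 cc II gg
  congr 1
  apply tsum_congr
  intro k
  ring

lemma summable_ccII {y α : ℝ} (hy : 0 ≤ y) (h0 : 0 ≤ α) (h1 : α ≤ 1) :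
    Summable (fun k : ℕ => y^k/(Nat.factorial k : ℝ) * (cc k * II k (α^2))) := by
  apply summable_c hy
  intro k
  have hII0 : 0 ≤ II k (α^2) := II_nonneg (sq_nonneg α) (by nlinarith)
  have hIIle : II k (α^2) ≤ 2*α := II_le_two_mul h0 h1
  have hc := cc_pos k
  have hcle := cc_le k
  rw [abs_of_nonneg (mul_nonneg hc.le hII0)]
  calc cc k * II k (α^2) ≤ cc k * (2*α) := mul_le_mul_of_nonneg_left hIIle hc.le
    _ ≤ ((k:ℝ)+2)/4 * 2 := by nlinarith
    _ ≤ (k:ℝ)+1 := by nlinarith [Nat.cast_nonneg (α := ℝ) k]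

lemma pow21_upper {lam α : ℝ} (hl : 0 ≤ lam) (h0 : 0 ≤ α) (h1 : α ≤ 1) :
    pow21 lam α ≤ QQ lam * α := by
  have hy : (0:ℝ) ≤ 2*lam := by linarith
  rw [pow21_term_eq]
  have hterm : ∀ k : ℕ, (2*lam)^k/(Nat.factorial k : ℝ) * (cc k * II k (α^2))
      ≤ (2*lam)^k/(Nat.factorial k : ℝ) * (2 * cc k * α) := by
    intro k
    have hIIle : II k (α^2) ≤ 2*α := II_le_two_mul h0 h1
    have hc := cc_pos k
    have hfac : (0:ℝ) ≤ (2*lam)^k/(Nat.factorial k : ℝ) := by positivity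
    have : cc k * II k (α^2) ≤ 2 * cc k * α := by nlinarith
    exact mul_le_mul_of_nonneg_left this hfac
  have hsumL := summable_ccII hy h0 h1
  have hsumR : Summable (fun k : ℕ => (2*lam)^k/(Nat.factorial k : ℝ) * (2 * cc k * α)) := by
    apply summable_c hy
    intro k
    have hc := cc_pos k
    have hcle := cc_le k
    rw [abs_of_nonneg (by positivity)]
    nlinarith [Nat.cast_nonneg (α := ℝ) k, abs_nonneg α, abs_le.2 ⟨by linarith, h1⟩]
  have hts := Summable.tsum_le_tsum hterm hsumL hsumR
  have hR : ∑' k : ℕ, (2*lam)^k/(Nat.factorial k : ℝ) * (2 * cc k * α)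
      = (∑' k : ℕ, (2*lam)^k/(Nat.factorial k : ℝ) * (2 * cc k)) * α := by
    rw [← tsum_mul_right]
    apply tsum_congr; intro k; ring
  rw [hR] at hts
  unfold QQ
  have := mul_le_mul_of_nonneg_left hts (Real.exp_nonneg (-2*lam))
  calc Real.exp (-2*lam) * ∑' k : ℕ, (2*lam)^k/(Nat.factorial k : ℝ) * (cc k * II k (α^2))
      ≤ Real.exp (-2*lam) * ((∑' k : ℕ, (2*lam)^k/(Nat.factorial k : ℝ) * (2 * cc k)) * α) := this
    _ = Real.exp (-2*lam) * (∑' k : ℕ, (2*lam)^k/(Nat.factorial k : ℝ) * (2 * cc k)) * α := by ring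

lemma eps_pos {lam : ℝ} (hl : 0 < lam) : QQ lam < 1 + lam := by
  set y := 2*lam with hydef
  have hy : 0 < y := by simp [hydef]; linarith
  have hsumR : Summable (fun k : ℕ => y^k/(Nat.factorial k : ℝ) * (1 + (k:ℝ)/2)) := by
    apply summable_c hy.le
    intro k
    rw [abs_of_nonneg (by positivity)]
    nlinarith [Nat.cast_nonneg (α := ℝ) k]
  have hlt : ∑' k : ℕ, y^k/(Nat.factorial k : ℝ) * (2 * cc k)
      < ∑' k : ℕ, y^k/(Nat.factorial k : ℝ) * (1 + (k:ℝ)/2) := by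
    apply Summable.tsum_lt_tsum_of_nonneg (i := 2)
    · intro k
      have := cc_pos k
      positivity
    · intro k
      have hcle := cc_le k
      have hfac : (0:ℝ) ≤ y^k/(Nat.factorial k : ℝ) := by positivity
      have : 2 * cc k ≤ 1 + (k:ℝ)/2 := by nlinarith
      exact mul_le_mul_of_nonneg_left this hfac
    · have hfac : (0:ℝ) < y^2/(Nat.factorial 2 : ℝ) := by positivity
      rw [cc_two]
      have : 2 * (15/16 : ℝ) < 1 + ((2:ℕ):ℝ)/2 := by norm_num
      exact mul_lt_mul_of_pos_left this hfac
    · exact hsumR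
  have hRval : ∑' k : ℕ, y^k/(Nat.factorial k : ℝ) * (1 + (k:ℝ)/2)
      = Real.exp y * (1 + y/2) := by
    have h1 : Summable (fun k : ℕ => y^k/(Nat.factorial k : ℝ)) := by
      have := summable_c hy.le (f := fun _ => (1:ℝ))
        (by intro k; rw [abs_one]; linarith [Nat.cast_nonneg (α := ℝ) k])
      simpa using this
    have h2 : Summable (fun k : ℕ => y^k/(Nat.factorial k : ℝ) * (k:ℝ)) := by
      apply summable_aux' hy.le
      intro k
      rw [abs_of_nonneg (Nat.cast_nonneg k)]
      nlinarith [Nat.cast_nonneg (α := ℝ) k]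
    have e : ∀ k : ℕ, y^k/(Nat.factorial k : ℝ) * (1 + (k:ℝ)/2)
        = y^k/(Nat.factorial k : ℝ) + (1/2) * (y^k/(Nat.factorial k : ℝ) * (k:ℝ)) := by
      intro k; ring
    rw [tsum_congr e, Summable.tsum_add h1 (h2.mul_left (1/2)), tsum_mul_left, tsum_mul_k hy.le,
      exp_tsum]
    ring
  unfold QQ
  rw [show (-2 : ℝ) * lam = -y by rw [hydef]; ring]
  calc Real.exp (-y) * ∑' k : ℕ, y^k/(Nat.factorial k : ℝ) * (2 * cc k)
      < Real.exp (-y) * (Real.exp y * (1 + y/2)) := by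
        apply mul_lt_mul_of_pos_left _ (Real.exp_pos _)
        rw [← hRval]; exact hlt
    _ = 1 + lam := by
        rw [show Real.exp (-y) * (Real.exp y * (1 + y/2)) = (Real.exp (-y) * Real.exp y) * (1 + y/2) by ring,
          ← Real.exp_add, neg_add_cancel, Real.exp_zero, hydef]
        ring

lemma pow12_upper_near1 {lam α : ℝ} (hl : 0 < lam) (h0 : 0 < α) (h1 : α < 1) :
    pow12 lam α < 1 - Real.exp (-lam/2) * (1-α) := by
  set x := lam/2 with hxdef
  have hx : 0 < x := by simp [hxdef]; linarith
  have hsumR : Summable (fun k : ℕ => x^k/(Nat.factorial k : ℝ) * (if k = 0 then α else 1)) := by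
    apply summable_c hx.le
    intro k
    rcases eq_or_ne k 0 with h | h <;>
      simp [h, abs_of_nonneg, h0.le, h1.le, abs_of_nonneg (le_of_lt h0)] <;>
      nlinarith [Nat.cast_nonneg (α := ℝ) k]
  have hlt : ∑' k : ℕ, x^k/(Nat.factorial k : ℝ) * (1 - (1-α)^(2*k+1))
      < ∑' k : ℕ, x^k/(Nat.factorial k : ℝ) * (if k = 0 then α else 1) := by
    apply Summable.tsum_lt_tsum_of_nonneg (i := 1)
    · intro k
      have hb : (1-α)^(2*k+1) ≤ 1 := pow_le_one₀ (by linarith) (by linarith)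
      have : (0:ℝ) ≤ 1 - (1-α)^(2*k+1) := by linarith
      positivity
    · intro k
      have hfac : (0:ℝ) ≤ x^k/(Nat.factorial k : ℝ) := by positivity
      rcases eq_or_ne k 0 with h | h
      · subst h; simp
      · simp only [h, if_false]
        have hb : (0:ℝ) ≤ (1-α)^(2*k+1) := pow_nonneg (by linarith) _
        exact mul_le_mul_of_nonneg_left (by linarith) hfac
    · have hfac : (0:ℝ) < x^1/(Nat.factorial 1 : ℝ) := by positivity
      simp only [one_ne_zero, if_false]
      have hb : (0:ℝ) < (1-α)^(2*1+1) := pow_pos (by linarith) _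
      exact mul_lt_mul_of_pos_left (by linarith) hfac
    · exact hsumR
  have hRval : ∑' k : ℕ, x^k/(Nat.factorial k : ℝ) * (if k = 0 then α else 1)
      = Real.exp x - (1-α) := by
    have h1s : Summable (fun k : ℕ => x^k/(Nat.factorial k : ℝ)) := by
      have := summable_c hx.le (f := fun _ => (1:ℝ))
        (by intro k; rw [abs_one]; linarith [Nat.cast_nonneg (α := ℝ) k])
      simpa using this
    have h2s : Summable (fun k : ℕ => if k = 0 then (1-α) else 0) := by
      apply summable_of_ne_finset_zero (s := {0})
      intro k hk
      simp only [Finset.mem_singleton] at hk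
      simp [hk]
    have e : ∀ k : ℕ, x^k/(Nat.factorial k : ℝ) * (if k = 0 then α else 1)
        = x^k/(Nat.factorial k : ℝ) - (if k = 0 then (1-α) else 0) := by
      intro k
      rcases eq_or_ne k 0 with h | h <;> simp [h] <;> ring
    rw [tsum_congr e, Summable.tsum_sub h1s h2s, exp_tsum]
    congr 1
    rw [tsum_eq_single 0]
    · simp
    · intro b hb; simp [hb]
  unfold pow12
  rw [hRval] at hlt
  have hepos : 0 < Real.exp (-lam/2) := Real.exp_pos _
  have := mul_lt_mul_of_pos_left hlt hepos
  have hexp : Real.exp (-lam/2) * Real.exp x = 1 := by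
    rw [← Real.exp_add, show -lam/2 + x = (0:ℝ) by rw [hxdef]; ring, Real.exp_zero]
  nlinarith [this]

lemma pow21_lower_near1 {lam α : ℝ} (hl : 0 < lam) (h0 : 0 < α) (h1 : α ≤ 1) :
    1 - (1-α^2)/(2*α) * Real.exp (-(2*lam)*α^2) ≤ pow21 lam α := by
  set y := 2*lam with hydef
  have hy : 0 < y := by simp [hydef]; linarith
  have hsq1 : α^2 ≤ 1 := by nlinarith
  have hA : 0 ≤ 1 - α^2 := by linarith
  -- summabilities
  have hexp_s : ∀ z : ℝ, 0 ≤ z → Summable (fun k : ℕ => z^k/(Nat.factorial k : ℝ)) := by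
    intro z hz
    have := summable_c hz (f := fun _ => (1:ℝ))
      (by intro k; rw [abs_one]; linarith [Nat.cast_nonneg (α := ℝ) k])
    simpa using this
  have hsum1 : Summable (fun k : ℕ => y^k/(Nat.factorial k : ℝ) * (cc k * II k ((1:ℝ)^2))) :=
    summable_ccII hy.le zero_le_one le_rfl
  have hsumα : Summable (fun k : ℕ => y^k/(Nat.factorial k : ℝ) * (cc k * II k (α^2))) :=
    summable_ccII hy.le h0.le h1
  -- value of the full series
  have hS1 : ∑' k : ℕ, y^k/(Nat.factorial k : ℝ) * (cc k * II k ((1:ℝ)^2)) = Real.exp y := by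
    rw [← exp_tsum y]
    apply tsum_congr
    intro k
    have hb := beta_id k
    have : cc k * II k ((1:ℝ)^2) = 1 := by
      unfold II gg
      rw [one_pow]
      exact hb
    rw [this, mul_one]
  -- termwise tail bound
  have htail : ∀ k : ℕ, y^k/(Nat.factorial k : ℝ) * (cc k * II k ((1:ℝ)^2))
        - y^k/(Nat.factorial k : ℝ) * (cc k * II k (α^2))
      ≤ (1-α^2)/(2*α) * ((y*(1-α^2))^k/(Nat.factorial k : ℝ)) := by
    intro k
    have hsplit : II k ((1:ℝ)^2) - II k (α^2) = ∫ b in (α^2)..(1:ℝ), gg k b := by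
      rw [one_pow]; exact II_split α
    have htle := tail_le (k := k) h0 h1
    have hcle : cc k ≤ ((k:ℝ)+1)/2 := by
      have := cc_le k
      have : ((k:ℝ)+2)/4 ≤ ((k:ℝ)+1)/2 := by nlinarith [Nat.cast_nonneg (α := ℝ) k]
      linarith [cc_le k]
    have hcpos := cc_pos k
    have hk1 : (0:ℝ) < (k:ℝ)+1 := by positivity
    have hfac : (0:ℝ) ≤ y^k/(Nat.factorial k : ℝ) := by positivity
    have htail0 : (0:ℝ) ≤ ∫ b in (α^2)..(1:ℝ), gg k b := by
      apply intervalIntegral.integral_nonneg hsq1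
      intro u hu
      unfold gg
      have : 0 ≤ 1 - u := by linarith [hu.2]
      exact mul_nonneg (Real.rpow_nonneg (le_trans (sq_nonneg α) hu.1) _) (pow_nonneg this k)
    have key : cc k * (II k ((1:ℝ)^2) - II k (α^2)) ≤ (1-α^2)^(k+1)/(2*α) := by
      rw [hsplit]
      calc cc k * ∫ b in (α^2)..(1:ℝ), gg k b
          ≤ (((k:ℝ)+1)/2) * ((1/α) * (1-α^2)^(k+1)/((k:ℝ)+1)) := by
            apply mul_le_mul hcle _ htail0 (by positivity)
            have := htle
            exact_mod_cast this
        _ = (1-α^2)^(k+1)/(2*α) := by field_simp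
    have hrw : (1-α^2)/(2*α) * ((y*(1-α^2))^k/(Nat.factorial k : ℝ))
        = y^k/(Nat.factorial k : ℝ) * ((1-α^2)^(k+1)/(2*α)) := by
      rw [mul_pow, pow_succ]
      field_simp
      ring
    rw [hrw, ← mul_sub]
    have : cc k * II k ((1:ℝ)^2) - cc k * II k (α^2) = cc k * (II k ((1:ℝ)^2) - II k (α^2)) := by ring
    rw [this]
    exact mul_le_mul_of_nonneg_left key hfac
  -- sum the bound
  have hsumB : Summable (fun k : ℕ => (1-α^2)/(2*α) * ((y*(1-α^2))^k/(Nat.factorial k : ℝ))) :=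
    (hexp_s (y*(1-α^2)) (by positivity)).mul_left _
  have hsumD : Summable (fun k : ℕ => y^k/(Nat.factorial k : ℝ) * (cc k * II k ((1:ℝ)^2))
      - y^k/(Nat.factorial k : ℝ) * (cc k * II k (α^2))) := hsum1.sub hsumα
  have hts := Summable.tsum_le_tsum htail hsumD hsumB
  rw [Summable.tsum_sub hsum1 hsumα, hS1] at hts
  have hBval : ∑' k : ℕ, (1-α^2)/(2*α) * ((y*(1-α^2))^k/(Nat.factorial k : ℝ))
      = (1-α^2)/(2*α) * Real.exp (y*(1-α^2)) := by
    rw [tsum_mul_left, exp_tsum]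
  rw [hBval] at hts
  -- conclude
  rw [pow21_term_eq]
  rw [show (-2 : ℝ) * lam = -y by rw [hydef]; ring]
  have hexpy : Real.exp (-y) * Real.exp y = 1 := by
    rw [← Real.exp_add, neg_add_cancel, Real.exp_zero]
  have hee : Real.exp (-y) * Real.exp (y*(1-α^2)) = Real.exp (-y*α^2) := by
    rw [← Real.exp_add]
    congr 1
    ring
  have hepos : (0:ℝ) < Real.exp (-y) := Real.exp_pos _
  have hmul := mul_le_mul_of_nonneg_left hts hepos.le
  have hgoal : Real.exp (-y) * (Real.exp y - ∑' k : ℕ, y^k/(Nat.factorial k : ℝ) * (cc k * II k (α^2)))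
      = 1 - Real.exp (-y) * ∑' k : ℕ, y^k/(Nat.factorial k : ℝ) * (cc k * II k (α^2)) := by
    rw [mul_sub, hexpy]
  have hB2 : Real.exp (-y) * ((1-α^2)/(2*α) * Real.exp (y*(1-α^2)))
      = (1-α^2)/(2*α) * Real.exp (-(y)*α^2) := by
    rw [show Real.exp (-y) * ((1-α^2)/(2*α) * Real.exp (y*(1-α^2)))
        = (1-α^2)/(2*α) * (Real.exp (-y) * Real.exp (y*(1-α^2))) by ring, hee]
  rw [hgoal, hB2] at hmul
  linarith [hmul]

lemma exp_series_summable {z : ℝ} (hz : 0 ≤ z) :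
    Summable (fun k : ℕ => z^k/(Nat.factorial k : ℝ)) := by
  have := summable_c hz (f := fun _ => (1:ℝ))
    (by intro k; rw [abs_one]; linarith [Nat.cast_nonneg (α := ℝ) k])
  simpa using this

lemma pow12_contOn {lam : ℝ} (hl : 0 ≤ lam) : ContinuousOn (pow12 lam) (Set.Icc 0 1) := by
  unfold pow12
  apply ContinuousOn.mul continuousOn_const
  apply continuousOn_tsum (u := fun k : ℕ => (lam/2)^k/(Nat.factorial k : ℝ))
  · intro k
    apply Continuous.continuousOn
    continuity
  · exact exp_series_summable (by linarith)
  · intro k α hα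
    obtain ⟨h0, h1⟩ := hα
    have hx : (0:ℝ) ≤ lam/2 := by linarith
    have hb0 : (0:ℝ) ≤ (1-α)^(2*k+1) := pow_nonneg (by linarith) _
    have hb1 : (1-α)^(2*k+1) ≤ 1 := pow_le_one₀ (by linarith) (by linarith)
    rw [Real.norm_eq_abs, abs_mul, abs_of_nonneg (by positivity : (0:ℝ) ≤ (lam/2)^k/(Nat.factorial k : ℝ)),
      abs_of_nonneg (by linarith : (0:ℝ) ≤ 1 - (1-α)^(2*k+1))]
    have hfac : (0:ℝ) ≤ (lam/2)^k/(Nat.factorial k : ℝ) := by positivity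
    nlinarith

lemma pow21_contOn {lam : ℝ} (hl : 0 ≤ lam) : ContinuousOn (pow21 lam) (Set.Icc 0 1) := by
  have heq : pow21 lam = fun α => Real.exp (-(2*lam)) *
      ∑' k : ℕ, (2*lam)^k/(Nat.factorial k : ℝ) * (cc k * II k (α^2)) := by
    funext α
    rw [pow21_term_eq]
    norm_num
  rw [heq]
  apply ContinuousOn.mul continuousOn_const
  apply continuousOn_tsum (u := fun k : ℕ => (2*lam)^k/(Nat.factorial k : ℝ) * ((k:ℝ)+1))
  · intro k
    exact ContinuousOn.mul continuousOn_const (ContinuousOn.mul continuousOn_const (II_contOn k))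
  · apply summable_c (by linarith : (0:ℝ) ≤ 2*lam)
    intro k
    rw [abs_of_nonneg (by positivity)]
  · intro k α hα
    obtain ⟨h0, h1⟩ := hα
    have hII0 : 0 ≤ II k (α^2) := II_nonneg (sq_nonneg α) (by nlinarith)
    have hIIle : II k (α^2) ≤ 2*α := II_le_two_mul h0 h1
    have hc := cc_pos k
    have hcle := cc_le k
    have hfac : (0:ℝ) ≤ (2*lam)^k/(Nat.factorial k : ℝ) := by positivity
    rw [Real.norm_eq_abs, abs_mul, abs_of_nonneg hfac, abs_of_nonneg (mul_nonneg hc.le hII0)]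
    have : cc k * II k (α^2) ≤ (k:ℝ)+1 := by nlinarith [Nat.cast_nonneg (α := ℝ) k]
    exact mul_le_mul_of_nonneg_left this hfac

lemma exists_a0 {lam : ℝ} (hl : 0 < lam) :
    ∃ a0 : ℝ, 0 < a0 ∧ a0 ≤ 1/2 ∧ ∀ α, 0 < α → α ≤ a0 → pow21 lam α < pow12 lam α := by
  set ε := 1 + lam - QQ lam with hε
  have hεpos : 0 < ε := by
    have := eps_pos hl
    simp [hε]; linarith
  have hD := DD_nonneg hl.le
  refine ⟨min (ε/(2*(DD lam + 1))) (1/2), ?_, min_le_right _ _, ?_⟩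
  · apply lt_min (by positivity) (by norm_num)
  · intro α hα0 hα
    have hα12 : α ≤ 1/2 := le_trans hα (min_le_right _ _)
    have hα1 : α ≤ 1 := by linarith
    have hαε : α ≤ ε/(2*(DD lam + 1)) := le_trans hα (min_le_left _ _)
    have hlow := pow12_lower hl.le hα0.le hα1
    have hup := pow21_upper hl.le hα0.le hα1
    have hkey : QQ lam * α < (1+lam)*α - DD lam * α^2 := by
      have hDα : DD lam * α ≤ ε/2 := by
        have h2 : 0 < 2*(DD lam + 1) := by linarith
        have := mul_le_mul_of_nonneg_left hαε hD
        calc DD lam * α ≤ DD lam * (ε/(2*(DD lam + 1))) := this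
          _ ≤ ε/2 := by
              have h3 : DD lam * (ε / (2*(DD lam + 1))) = (DD lam * ε) / (2*(DD lam + 1)) := by ring
              rw [h3, div_le_div_iff₀ h2 (by norm_num)]
              nlinarith
      nlinarith
    linarith

lemma exists_beta {lam : ℝ} (hl : 0 < lam) :
    ∃ β : ℝ, 1/2 < β ∧ β < 1 ∧ pow12 lam β < pow21 lam β := by
  set c := Real.exp (-lam/2) with hc
  set φ : ℝ → ℝ := fun α => (1+α)/(2*α) * Real.exp (-(2*lam)*α^2) with hφ
  have hφ1 : φ 1 < c := by
    have h1 : φ 1 = Real.exp (-(2*lam)) := by simp [hφ]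
    rw [h1, hc]
    apply Real.exp_lt_exp.2
    linarith
  have hcont : ContinuousAt φ 1 := by
    apply ContinuousAt.mul
    · apply ContinuousAt.div
      · fun_prop
      · fun_prop
      · norm_num
    · apply Real.continuous_exp.continuousAt.comp
      fun_prop
  have hev : ∀ᶠ α in nhds 1, φ α < c :=
    hcont.eventually_lt continuousAt_const hφ1
  obtain ⟨δ, hδpos, hδ⟩ := Metric.eventually_nhds_iff.1 hev
  set β := max (3/4 : ℝ) (1 - δ/2) with hβ
  have hβhalf : 1/2 < β := lt_of_lt_of_le (by norm_num) (le_max_left _ _)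
  have hβpos : 0 < β := by linarith
  have hβ1 : β < 1 := by
    apply max_lt (by norm_num)
    linarith
  have hβd : dist β 1 < δ := by
    rw [Real.dist_eq, abs_of_nonpos (by linarith)]
    have : 1 - δ/2 ≤ β := le_max_right _ _
    linarith
  have hφβ : φ β < c := hδ hβd
  have hup := pow12_upper_near1 hl hβpos hβ1
  have hlow := pow21_lower_near1 hl hβpos hβ1.le
  have hfact : (1-β^2)/(2*β) * Real.exp (-(2*lam)*β^2) = (1-β) * φ β := by
    rw [hφ]
    have : (1:ℝ) - β^2 = (1-β)*(1+β) := by ring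
    rw [this]
    field_simp
  have hkey : (1-β) * φ β < c * (1-β) := by
    have h1β : 0 < 1 - β := by linarith
    nlinarith
  refine ⟨β, hβhalf, hβ1, ?_⟩
  rw [hfact] at hlow
  calc pow12 lam β < 1 - c * (1-β) := by rw [hc]; exact hup
    _ ≤ 1 - (1-β) * φ β := by linarith
    _ ≤ pow21 lam β := hlow

/-- Proposition 4.3, case `l = 1` (`N = 3`): for each `λ > 0` there is `0 < α₁*(λ) < 1` with
`π_α(λ;1,2) > π_α(4λ;2,1)` for all `0 < α < α₁*(λ)`, with equality at `α = α₁*(λ)`. -/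
theorem prop_4_3_l_eq_one :
    ∀ lam : ℝ, 0 < lam → ∃ αstar : ℝ, 0 < αstar ∧ αstar < 1 ∧
      (∀ α : ℝ, 0 < α → α < αstar → pow12 lam α > pow21 lam α) ∧
      pow12 lam αstar = pow21 lam αstar := by
  intro lam hl
  obtain ⟨a0, ha0pos, ha0half, ha0⟩ := exists_a0 hl
  obtain ⟨β, hβhalf, hβ1, hβ⟩ := exists_beta hl
  have ha0β : a0 < β := lt_of_le_of_lt ha0half hβhalf
  set f : ℝ → ℝ := fun α => pow12 lam α - pow21 lam α with hf
  have hsub : Set.Icc a0 β ⊆ Set.Icc (0:ℝ) 1 := by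
    intro x hx
    exact ⟨le_trans ha0pos.le hx.1, le_trans hx.2 hβ1.le⟩
  have hfcont : ContinuousOn f (Set.Icc a0 β) :=
    ((pow12_contOn hl.le).sub (pow21_contOn hl.le)).mono hsub
  set S : Set ℝ := Set.Icc a0 β ∩ f ⁻¹' Set.Iic 0 with hS
  have hclosed : IsClosed S :=
    hfcont.preimage_isClosed_of_isClosed isClosed_Icc isClosed_Iic
  have hβS : β ∈ S := by
    constructor
    · exact ⟨ha0β.le, le_rfl⟩
    · simp only [Set.mem_preimage, Set.mem_Iic, hf]
      linarith [hβ]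
  have hbdd : BddBelow S := ⟨a0, fun x hx => hx.1.1⟩
  set αstar := sInf S with hαstar
  have hmem : αstar ∈ S := hclosed.csInf_mem ⟨β, hβS⟩ hbdd
  have h1 : a0 ≤ αstar := hmem.1.1
  have h2 : αstar ≤ β := hmem.1.2
  have h3 : f αstar ≤ 0 := hmem.2
  have hfa0 : 0 < f a0 := by
    have := ha0 a0 ha0pos le_rfl
    simp only [hf]
    linarith
  have hstar_gt : a0 < αstar := by
    rcases lt_or_eq_of_le h1 with h | h
    · exact h
    · exfalso; rw [← h] at h3; linarith
  have hpos : ∀ α : ℝ, 0 < α → α < αstar → 0 < f α := by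
    intro α hα0 hαs
    rcases le_or_gt α a0 with h | h
    · have := ha0 α hα0 h
      simp only [hf]; linarith
    · have hmemIcc : α ∈ Set.Icc a0 β := ⟨h.le, le_trans hαs.le h2⟩
      by_contra hcon
      push_neg at hcon
      have : α ∈ S := ⟨hmemIcc, by simpa [Set.mem_preimage, Set.mem_Iic] using hcon⟩
      have := csInf_le hbdd this
      rw [← hαstar] at this
      linarith
  have hge : 0 ≤ f αstar := by
    set C : Set ℝ := Set.Icc a0 β ∩ f ⁻¹' Set.Ici 0 with hC
    have hCclosed : IsClosed C :=
      hfcont.preimage_isClosed_of_isClosed isClosed_Icc isClosed_Ici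
    have hsubC : Set.Ico a0 αstar ⊆ C := by
      intro x hx
      refine ⟨⟨hx.1, le_trans hx.2.le h2⟩, ?_⟩
      simp only [Set.mem_preimage, Set.mem_Ici]
      exact (hpos x (lt_of_lt_of_le ha0pos hx.1) hx.2).le
    have hclosure : Set.Icc a0 αstar ⊆ C := by
      rw [← closure_Ico (ne_of_lt hstar_gt)]
      exact hCclosed.closure_subset_iff.2 hsubC
    have : αstar ∈ C := hclosure ⟨hstar_gt.le.trans le_rfl, le_rfl⟩
    exact this.2
  refine ⟨αstar, lt_of_lt_of_le ha0pos h1, lt_of_le_of_lt h2 hβ1, ?_, ?_⟩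
  · intro α hα0 hαs
    have := hpos α hα0 hαs
    simp only [hf] at this
    linarith
  · have : f αstar = 0 := le_antisymm h3 hge
    simp only [hf] at this
    linarith
end

section
/- For every natural number k, 1 + k/2 ≥ Γ(3/2 + k)/(Γ(3/2)·k!), i.e. Γ(k + 3/2) ≤ (1 + k/2)·Γ(3/2)·k!, with equality if and only if k = 0 or k = 1 (strict inequality for all k ≥ 2). -/
open Real

lemma gamma32_pos : 0 < Real.Gamma (3 / 2) := Real.Gamma_pos_of_pos (by norm_num)

lemma step_eq (k : ℕ) :
    Real.Gamma (3 / 2 + ((k : ℝ) + 1)) = (3 / 2 + (k : ℝ)) * Real.Gamma (3 / 2 + (k : ℝ)) := by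
  have h : (3 / 2 : ℝ) + ((k : ℝ) + 1) = (3 / 2 + (k : ℝ)) + 1 := by ring
  rw [h, Real.Gamma_add_one (by positivity)]

lemma ineqBBB_le (k : ℕ) :
    Real.Gamma (3 / 2 + (k : ℝ)) ≤ (1 + (k : ℝ) / 2) * (Real.Gamma (3 / 2) * (Nat.factorial k : ℝ)) := by
  induction k with
  | zero => simp
  | succ n ih =>
      have hfac : ((Nat.factorial (n + 1) : ℝ)) = ((n : ℝ) + 1) * (Nat.factorial n : ℝ) := by
        push_cast [Nat.factorial_succ]; ring
      have hgpos := gamma32_pos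
      have hfpos : (0 : ℝ) < (Nat.factorial n : ℝ) := by positivity
      push_cast
      rw [step_eq n, hfac]
      have h1 : (3 / 2 + (n : ℝ)) * Real.Gamma (3 / 2 + (n : ℝ))
          ≤ (3 / 2 + (n : ℝ)) * ((1 + (n : ℝ) / 2) * (Real.Gamma (3 / 2) * (Nat.factorial n : ℝ))) := by
        apply mul_le_mul_of_nonneg_left ih (by positivity)
      refine h1.trans ?_
      have hprod : (0 : ℝ) ≤ Real.Gamma (3 / 2) * (Nat.factorial n : ℝ) := by positivity
      nlinarith [mul_nonneg (by positivity : (0:ℝ) ≤ (n:ℝ)/4) hprod]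

lemma ineqBBB_lt (k : ℕ) :
    Real.Gamma (3 / 2 + ((k : ℝ) + 2)) < (1 + ((k : ℝ) + 2) / 2) * (Real.Gamma (3 / 2) * (Nat.factorial (k + 2) : ℝ)) := by
  have hgpos := gamma32_pos
  have hfpos : (0 : ℝ) < (Nat.factorial (k + 1) : ℝ) := by positivity
  have hfac : ((Nat.factorial (k + 2) : ℝ)) = ((k : ℝ) + 2) * (Nat.factorial (k + 1) : ℝ) := by
    push_cast [Nat.factorial_succ]; ring
  have heq : Real.Gamma (3 / 2 + ((k : ℝ) + 2)) = (3 / 2 + ((k : ℝ) + 1)) * Real.Gamma (3 / 2 + ((k : ℝ) + 1)) := by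
    have := step_eq (k + 1)
    push_cast at this
    convert this using 2 <;> ring
  have ih := ineqBBB_le (k + 1)
  push_cast at ih
  rw [heq, hfac]
  have h1 : (3 / 2 + ((k : ℝ) + 1)) * Real.Gamma (3 / 2 + ((k : ℝ) + 1))
      ≤ (3 / 2 + ((k : ℝ) + 1)) * ((1 + ((k : ℝ) + 1) / 2) * (Real.Gamma (3 / 2) * (Nat.factorial (k + 1) : ℝ))) := by
    apply mul_le_mul_of_nonneg_left ih (by positivity)
  refine h1.trans_lt ?_
  have hprod : (0 : ℝ) < Real.Gamma (3 / 2) * (Nat.factorial (k + 1) : ℝ) := by positivity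
  nlinarith [mul_pos (by positivity : (0:ℝ) < ((k:ℝ)+2)/4) hprod]

/-- Inequality (ineqBBB) in Proposition 4.3 (`l = 1`, `N = 3`):
`1 + k/2 ≥ Γ(3/2 + k)/(Γ(3/2)·k!)`, with equality iff `k = 0` or `k = 1`. -/
theorem ineqBBB (k : ℕ) :
    1 + (k : ℝ) / 2 ≥ Real.Gamma (3 / 2 + (k : ℝ)) / (Real.Gamma (3 / 2) * (Nat.factorial k : ℝ)) ∧
    (1 + (k : ℝ) / 2 = Real.Gamma (3 / 2 + (k : ℝ)) / (Real.Gamma (3 / 2) * (Nat.factorial k : ℝ))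
      ↔ k = 0 ∨ k = 1) := by
  have hgpos := gamma32_pos
  have hfpos : (0 : ℝ) < (Nat.factorial k : ℝ) := by positivity
  have hdpos : (0 : ℝ) < Real.Gamma (3 / 2) * (Nat.factorial k : ℝ) := by positivity
  constructor
  · rw [ge_iff_le, div_le_iff₀ hdpos]
    exact ineqBBB_le k
  · constructor
    · intro heq
      by_contra hk
      push_neg at hk
      obtain ⟨h0, h1⟩ := hk
      obtain ⟨m, rfl⟩ : ∃ m, k = m + 2 := by
        rcases k with _ | _ | m
        · exact absurd rfl h0
        · exact absurd rfl h1
        · exact ⟨m, rfl⟩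
      have := ineqBBB_lt m
      push_cast at this heq
      rw [eq_div_iff (ne_of_gt hdpos)] at heq
      push_cast at heq
      nlinarith
    · rintro (rfl | rfl)
      · simp [div_self (ne_of_gt hgpos)]
      · have : Real.Gamma (3 / 2 + (1 : ℝ)) = (3 / 2) * Real.Gamma (3 / 2) := by
          have := step_eq 0; push_cast at this; convert this using 2 <;> ring
        simp only [Nat.cast_one]
        rw [this]
        field_simp
        ring
end

section
/- For every natural number k, (3/4)^k · Σ_{r=0}^k C(k,r) · 3^{−r} · (1/2 + r) ≥ Γ(3/2 + k)/(Γ(1/2)·k!), with equality if and only if k = 0 or k = 1 (strict inequality for all k ≥ 2). -/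
open Real Finset

lemma sumA (x : ℝ) (k : ℕ) :
    ∑ r ∈ Finset.range (k + 1), (Nat.choose k r : ℝ) * x ^ r = (1 + x) ^ k := by
  rw [show (1 + x) = x + 1 by ring, add_pow]
  simp [mul_comm]

lemma sumB (x : ℝ) (k : ℕ) :
    ∑ r ∈ Finset.range (k + 2), (r : ℝ) * (Nat.choose (k + 1) r : ℝ) * x ^ r
      = (k + 1) * x * (1 + x) ^ k := by
  rw [Finset.sum_range_succ']
  have h : ∀ r : ℕ, ((r : ℝ) + 1) * (Nat.choose (k + 1) (r + 1) : ℝ) * x ^ (r + 1)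
      = ((k : ℝ) + 1) * x * ((Nat.choose k r : ℝ) * x ^ r) := by
    intro r
    have := Nat.add_one_mul_choose_eq k r
    have hc : ((k : ℝ) + 1) * (Nat.choose k r : ℝ)
        = (Nat.choose (k + 1) (r + 1) : ℝ) * ((r : ℝ) + 1) := by
      exact_mod_cast congrArg (Nat.cast : ℕ → ℝ) this
    rw [pow_succ]
    linear_combination (-(x ^ r * x)) * hc
  simp only [Nat.cast_add, Nat.cast_one]
  rw [Finset.sum_congr rfl (fun r _ => by rw [h r])]
  rw [← Finset.mul_sum, sumA]
  ring

lemma sumS (k : ℕ) :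
    ∑ r ∈ Finset.range (k + 1), (Nat.choose k r : ℝ) / (3 : ℝ) ^ r * (1 / 2 + (r : ℝ))
      = ((k : ℝ) + 2) * 4 ^ k / (4 * 3 ^ k) := by
  have hterm : ∀ r : ℕ, (Nat.choose k r : ℝ) / (3 : ℝ) ^ r * (1 / 2 + (r : ℝ))
      = (1 / 2) * ((Nat.choose k r : ℝ) * (1 / 3 : ℝ) ^ r)
        + (r : ℝ) * (Nat.choose k r : ℝ) * (1 / 3 : ℝ) ^ r := by
    intro r
    rw [div_pow]
    field_simp
    ring
  rw [Finset.sum_congr rfl (fun r _ => hterm r), Finset.sum_add_distrib, ← Finset.mul_sum,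
    sumA]
  rcases k with _ | k
  · norm_num
  · rw [sumB]
    have h4 : (1 + 1 / 3 : ℝ) = 4 / 3 := by norm_num
    rw [h4, div_pow, div_pow]
    push_cast
    field_simp
    ring

lemma gam (k : ℕ) : Real.Gamma (3 / 2 + (k : ℝ))
    = Real.Gamma (1 / 2) * (Nat.factorial (2 * k + 1) : ℝ)
      / (2 ^ (2 * k + 1) * (Nat.factorial k : ℝ)) := by
  induction k with
  | zero =>
      simp only [Nat.cast_zero, add_zero]
      rw [show (3 / 2 : ℝ) = 1 / 2 + 1 by norm_num, Real.Gamma_add_one (by norm_num)]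
      norm_num [Nat.factorial]
      ring
  | succ n ih =>
      have h1 : (3 / 2 : ℝ) + (n + 1 : ℕ) = (3 / 2 + (n : ℝ)) + 1 := by push_cast; ring
      rw [h1, Real.Gamma_add_one (by positivity), ih]
      have hf1 : (Nat.factorial (2 * (n + 1) + 1) : ℝ)
          = (2 * n + 2) * (2 * n + 3) * (Nat.factorial (2 * n + 1)) := by
        have : 2 * (n + 1) + 1 = (2 * n + 1) + 1 + 1 := by ring
        rw [this, Nat.factorial_succ, Nat.factorial_succ]
        push_cast
        ring
      have hf2 : (Nat.factorial (n + 1) : ℝ) = (n + 1) * Nat.factorial n := by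
        rw [Nat.factorial_succ]; push_cast; ring
      rw [hf1, hf2]
      have hfn : (Nat.factorial n : ℝ) ≠ 0 := by positivity
      have hp : (2 : ℝ) ^ (2 * n + 1) ≠ 0 := by positivity
      rw [show 2 * (n + 1) + 1 = (2 * n + 1) + 2 by ring, pow_add]
      field_simp
      ring

lemma natkey : ∀ k : ℕ, 2 ≤ k →
    4 * Nat.factorial (2 * k + 1) < (k + 2) * 2 ^ (2 * k + 1) * (Nat.factorial k) ^ 2 := by
  intro k hk
  induction k with
  | zero => omega
  | succ n ih =>
      rcases Nat.lt_or_ge n 2 with hn | hn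
      · interval_cases n
        · omega
        · decide
      · have IH := ih hn
        have hf1 : Nat.factorial (2 * (n + 1) + 1)
            = (2 * n + 2) * (2 * n + 3) * Nat.factorial (2 * n + 1) := by
          have : 2 * (n + 1) + 1 = (2 * n + 1) + 1 + 1 := by ring
          rw [this, Nat.factorial_succ, Nat.factorial_succ]
          ring
        have hf2 : Nat.factorial (n + 1) = (n + 1) * Nat.factorial n := Nat.factorial_succ n
        calc 4 * Nat.factorial (2 * (n + 1) + 1)
            = (4 * Nat.factorial (2 * n + 1)) * ((2 * n + 2) * (2 * n + 3)) := by
              rw [hf1]; ring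
          _ < ((n + 2) * 2 ^ (2 * n + 1) * (Nat.factorial n) ^ 2) * ((2 * n + 2) * (2 * n + 3)) := by
              apply Nat.mul_lt_mul_of_lt_of_le IH (le_refl _)
              positivity
          _ ≤ (n + 1 + 2) * 2 ^ (2 * (n + 1) + 1) * (Nat.factorial (n + 1)) ^ 2 := by
              rw [hf2, show (2:ℕ) ^ (2 * (n + 1) + 1) = 2 ^ (2 * n + 1) * 2 ^ 2 by rw [← pow_add]; ring_nf]
              have key : (n + 2) * ((2 * n + 2) * (2 * n + 3)) ≤ (n + 3) * (2 ^ 2 * (n + 1) ^ 2) := by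
                nlinarith
              calc (n + 2) * 2 ^ (2 * n + 1) * Nat.factorial n ^ 2 * ((2 * n + 2) * (2 * n + 3))
                  = ((n + 2) * ((2 * n + 2) * (2 * n + 3))) * (2 ^ (2 * n + 1) * Nat.factorial n ^ 2) := by ring
                _ ≤ ((n + 3) * (2 ^ 2 * (n + 1) ^ 2)) * (2 ^ (2 * n + 1) * Nat.factorial n ^ 2) :=
                    Nat.mul_le_mul_right _ key
                _ = (n + 1 + 2) * (2 ^ (2 * n + 1) * 2 ^ 2) * ((n + 1) * Nat.factorial n) ^ 2 := by ring

/-- Inequality (ineqBB), the case `δ = 1` of the key sufficient condition in the proof of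
Proposition 4.3 for `l = 1`:
`(3/4)^k Σ_{r=0}^k C(k,r) 3^{-r} (1/2 + r) ≥ Γ(3/2+k)/(Γ(1/2)·k!)`,
with equality iff `k = 0` or `k = 1`. -/
theorem ineqBB (k : ℕ) :
    (3 / 4 : ℝ) ^ k * ∑ r ∈ Finset.range (k + 1),
        (Nat.choose k r : ℝ) / (3 : ℝ) ^ r * (1 / 2 + (r : ℝ))
      ≥ Real.Gamma (3 / 2 + (k : ℝ)) / (Real.Gamma (1 / 2) * (Nat.factorial k : ℝ)) ∧
    ((3 / 4 : ℝ) ^ k * ∑ r ∈ Finset.range (k + 1),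
        (Nat.choose k r : ℝ) / (3 : ℝ) ^ r * (1 / 2 + (r : ℝ))
      = Real.Gamma (3 / 2 + (k : ℝ)) / (Real.Gamma (1 / 2) * (Nat.factorial k : ℝ))
      ↔ k = 0 ∨ k = 1) := by
  have hΓ : Real.Gamma (1 / 2) ≠ 0 :=
    ne_of_gt (Real.Gamma_pos_of_pos (by norm_num))
  have hfk : (Nat.factorial k : ℝ) ≠ 0 := by positivity
  have hR : Real.Gamma (3 / 2 + (k : ℝ)) / (Real.Gamma (1 / 2) * (Nat.factorial k : ℝ))
      = (Nat.factorial (2 * k + 1) : ℝ) / (2 ^ (2 * k + 1) * (Nat.factorial k : ℝ) ^ 2) := by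
    rw [gam]
    have hp : (2 : ℝ) ^ (2 * k + 1) ≠ 0 := by positivity
    field_simp
  have hL : (3 / 4 : ℝ) ^ k * ∑ r ∈ Finset.range (k + 1),
        (Nat.choose k r : ℝ) / (3 : ℝ) ^ r * (1 / 2 + (r : ℝ)) = ((k : ℝ) + 2) / 4 := by
    rw [sumS, div_pow]
    have h3 : (3 : ℝ) ^ k ≠ 0 := by positivity
    have h4 : (4 : ℝ) ^ k ≠ 0 := by positivity
    field_simp
  rw [hL, hR]
  match k with
  | 0 => norm_num [Nat.factorial]
  | 1 => norm_num [Nat.factorial]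
  | (n + 2) =>
      have hn := natkey (n + 2) (by omega)
      have hcast : (4 : ℝ) * (Nat.factorial (2 * (n + 2) + 1) : ℝ)
          < ((n + 2 : ℕ) + 2 : ℝ) * 2 ^ (2 * (n + 2) + 1) * (Nat.factorial (n + 2) : ℝ) ^ 2 := by
        exact_mod_cast hn
      have hd : (0 : ℝ) < 2 ^ (2 * (n + 2) + 1) * (Nat.factorial (n + 2) : ℝ) ^ 2 := by positivity
      have hlt : (Nat.factorial (2 * (n + 2) + 1) : ℝ)
            / (2 ^ (2 * (n + 2) + 1) * (Nat.factorial (n + 2) : ℝ) ^ 2)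
          < (((n + 2 : ℕ) : ℝ) + 2) / 4 := by
        rw [div_lt_div_iff₀ hd (by norm_num)]
        push_cast at hcast ⊢
        nlinarith [hcast]
      constructor
      · exact le_of_lt hlt
      · constructor
        · intro h
          exfalso
          rw [h] at hlt
          exact lt_irrefl _ hlt
        · intro h
          rcases h with h | h <;> simp at h
end

section
/- For every natural number k, 3/4 + 9k/8 + 9k(k−1)/64 ≥ Γ(5/2 + k)/(Γ(1/2)·k!), with equality if and only if k ∈ {0, 1, 2} (strict inequality for all k ≥ 3). -/
open Real

noncomputable def aCCC : ℕ → ℝ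
  | 0 => 3 / 4
  | (k + 1) => aCCC k * (5 / 2 + k) / (k + 1)

lemma gammaCCC (k : ℕ) :
    Real.Gamma (5 / 2 + (k : ℝ)) =
      Real.Gamma (1 / 2) * (Nat.factorial k : ℝ) * aCCC k := by
  induction k with
  | zero =>
    have h1 : (5 / 2 : ℝ) = 3 / 2 + 1 := by norm_num
    have h2 : (3 / 2 : ℝ) = 1 / 2 + 1 := by norm_num
    simp only [Nat.cast_zero, add_zero, Nat.factorial_zero, Nat.cast_one, aCCC]
    rw [h1, Real.Gamma_add_one (by norm_num), h2, Real.Gamma_add_one (by norm_num)]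
    ring
  | succ n ih =>
    have h1 : (5 / 2 : ℝ) + (n + 1 : ℕ) = (5 / 2 + n) + 1 := by push_cast; ring
    rw [h1, Real.Gamma_add_one (by positivity), ih]
    have hn : ((n : ℝ) + 1) ≠ 0 := by positivity
    simp only [aCCC, Nat.factorial_succ]
    push_cast
    field_simp

lemma boundCCC (k : ℕ) :
    3 / 4 + 9 * (k : ℝ) / 8 + 9 * (k : ℝ) * ((k : ℝ) - 1) / 64 ≥ aCCC k ∧
    (3 ≤ k → 3 / 4 + 9 * (k : ℝ) / 8 + 9 * (k : ℝ) * ((k : ℝ) - 1) / 64 > aCCC k) := by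
  induction k with
  | zero => norm_num [aCCC]
  | succ n ih =>
    obtain ⟨h1, h2⟩ := ih
    have hn : (0 : ℝ) < (n : ℝ) + 1 := by positivity
    have hnn : (0 : ℝ) ≤ (n : ℝ) * ((n : ℝ) - 1) := by
      rcases Nat.eq_zero_or_pos n with h | h
      · simp [h]
      · have : (1 : ℝ) ≤ (n : ℝ) := by exact_mod_cast h
        nlinarith
    have hr : (0 : ℝ) < (5 / 2 + (n : ℝ)) / ((n : ℝ) + 1) := by positivity
    have hstep : aCCC (n + 1) = aCCC n * ((5 / 2 + (n : ℝ)) / ((n : ℝ) + 1)) := by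
      simp only [aCCC]; ring
    set P : ℝ := 3 / 4 + 9 * (n : ℝ) / 8 + 9 * (n : ℝ) * ((n : ℝ) - 1) / 64 with hP
    set Q : ℝ := 3 / 4 + 9 * ((n : ℝ) + 1) / 8 + 9 * ((n : ℝ) + 1) * (((n : ℝ) + 1) - 1) / 64
      with hQ
    have key : P * ((5 / 2 + (n : ℝ)) / ((n : ℝ) + 1)) ≤ Q := by
      rw [mul_div_assoc', div_le_iff₀ hn, hP, hQ]
      nlinarith [hnn]
    have keys : 2 ≤ n → P * ((5 / 2 + (n : ℝ)) / ((n : ℝ) + 1)) < Q := by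
      intro hn2
      have : (2 : ℝ) ≤ (n : ℝ) := by exact_mod_cast hn2
      rw [mul_div_assoc', div_lt_iff₀ hn, hP, hQ]
      nlinarith
    have hle : aCCC (n + 1) ≤ P * ((5 / 2 + (n : ℝ)) / ((n : ℝ) + 1)) := by
      rw [hstep]
      exact mul_le_mul_of_nonneg_right h1 (le_of_lt hr)
    constructor
    · push_cast
      exact le_trans hle key
    · intro h3
      have hn2 : 2 ≤ n := by omega
      push_cast
      exact lt_of_le_of_lt hle (keys hn2)

/-- Inequality (CCC) in the proof of Proposition 4.3 for `l = 2` (`N = 5`):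
`3/4 + 9k/8 + 9k(k-1)/64 ≥ Γ(5/2 + k)/(Γ(1/2)·k!)`, with equality iff `k ∈ {0, 1, 2}`. -/
theorem ineqCCC (k : ℕ) :
    3 / 4 + 9 * (k : ℝ) / 8 + 9 * (k : ℝ) * ((k : ℝ) - 1) / 64
      ≥ Real.Gamma (5 / 2 + (k : ℝ)) / (Real.Gamma (1 / 2) * (Nat.factorial k : ℝ)) ∧
    (3 / 4 + 9 * (k : ℝ) / 8 + 9 * (k : ℝ) * ((k : ℝ) - 1) / 64
      = Real.Gamma (5 / 2 + (k : ℝ)) / (Real.Gamma (1 / 2) * (Nat.factorial k : ℝ))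
      ↔ k = 0 ∨ k = 1 ∨ k = 2) := by
  have hg : Real.Gamma (1 / 2) ≠ 0 := ne_of_gt (Real.Gamma_pos_of_pos (by norm_num))
  have hf : (Nat.factorial k : ℝ) ≠ 0 := by positivity
  have key : Real.Gamma (5 / 2 + (k : ℝ)) / (Real.Gamma (1 / 2) * (Nat.factorial k : ℝ))
      = aCCC k := by
    rw [gammaCCC k]
    field_simp
  rw [key]
  obtain ⟨h1, h2⟩ := boundCCC k
  refine ⟨h1, ?_⟩
  constructor
  · intro heq
    by_contra hc
    push_neg at hc
    have h3 : 3 ≤ k := by omega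
    exact absurd heq (ne_of_gt (h2 h3))
  · rintro (rfl | rfl | rfl) <;> norm_num [aCCC]
end

section
/- For every integer l ≥ 1 and every integer k ≥ 1, the function δ ↦ ((1/2 + δ)/(1 + δ))^k · Σ_{r=0}^k C(k,r)·(1 + 2δ)^{−r}·Γ(l + 1/2 + r)/Γ(1/2 + r) is strictly decreasing on [0, ∞). -/
open Real Finset

private noncomputable def gfun (l r : ℕ) : ℝ :=
  Real.Gamma ((l : ℝ) + 1 / 2 + (r : ℝ)) / Real.Gamma (1 / 2 + (r : ℝ))

private lemma gfun_strictMono (l : ℕ) (hl : 1 ≤ l) : StrictMono (gfun l) := by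
  apply strictMono_nat_of_lt_succ
  intro r
  have hb : (0:ℝ) < 1/2 + (r:ℝ) := by positivity
  have ha : (0:ℝ) < (l:ℝ) + 1/2 + (r:ℝ) := by positivity
  have hG1 := Real.Gamma_pos_of_pos ha
  have hG2 := Real.Gamma_pos_of_pos hb
  have hl' : (1:ℝ) ≤ (l:ℝ) := by exact_mod_cast hl
  have e1 : Real.Gamma ((l:ℝ) + 1/2 + ((r+1 : ℕ):ℝ))
      = ((l:ℝ) + 1/2 + (r:ℝ)) * Real.Gamma ((l:ℝ) + 1/2 + (r:ℝ)) := by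
    rw [show ((l:ℝ) + 1/2 + ((r+1 : ℕ):ℝ)) = ((l:ℝ) + 1/2 + (r:ℝ)) + 1 by push_cast; ring,
      Real.Gamma_add_one ha.ne']
  have e2 : Real.Gamma (1/2 + ((r+1 : ℕ):ℝ))
      = (1/2 + (r:ℝ)) * Real.Gamma (1/2 + (r:ℝ)) := by
    rw [show (1/2 + ((r+1 : ℕ):ℝ)) = (1/2 + (r:ℝ)) + 1 by push_cast; ring,
      Real.Gamma_add_one hb.ne']
  unfold gfun
  rw [e1, e2, div_lt_div_iff₀ hG2 (by positivity)]
  nlinarith [mul_pos hG1 hG2]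

private lemma double_sum_lt {k : ℕ} (hk : 1 ≤ k) {p q : ℝ} (hp : 0 < p) (hpq : p < q)
    {g : ℕ → ℝ} (hg : StrictMono g) (c : ℕ → ℝ) (hc : ∀ r, r ≤ k → 0 < c r) :
    (∑ r ∈ range (k+1), c r * g r * q ^ (k-r)) * (∑ s ∈ range (k+1), c s * p ^ (k-s)) <
    (∑ r ∈ range (k+1), c r * g r * p ^ (k-r)) * (∑ s ∈ range (k+1), c s * q ^ (k-s)) := by
  have hq0 : 0 < q := hp.trans hpq
  set F : ℕ → ℕ → ℝ := fun r s =>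
    c r * g r * p ^ (k - r) * (c s * q ^ (k - s)) -
      c r * g r * q ^ (k - r) * (c s * p ^ (k - s)) with hF
  have hD : ∀ r s : ℕ, r < s → s ≤ k →
      p ^ (k-r) * q ^ (k-s) - q ^ (k-r) * p ^ (k-s) < 0 := by
    intro r s hrs hsk
    have e : k - r = (k - s) + (s - r) := by omega
    have hps : p ^ (s-r) < q ^ (s-r) := pow_lt_pow_left₀ hpq hp.le (by omega)
    rw [e, pow_add, pow_add]
    have h1 : (0:ℝ) < p ^ (k-s) := pow_pos hp _
    have h2 : (0:ℝ) < q ^ (k-s) := pow_pos hq0 _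
    nlinarith [mul_lt_mul_of_pos_left hps (mul_pos h1 h2)]
  have hFF : ∀ r s : ℕ, F r s + F s r =
      c r * c s * ((g r - g s) * (p^(k-r) * q^(k-s) - q^(k-r) * p^(k-s))) := by
    intro r s
    simp only [hF]
    ring
  have hterm : ∀ r s : ℕ, r ≤ k → s ≤ k → 0 ≤ F r s + F s r := by
    intro r s hr hs
    rw [hFF r s]
    rcases lt_trichotomy r s with h | h | h
    · exact mul_nonneg (mul_nonneg (hc r hr).le (hc s hs).le)
        (mul_pos_of_neg_of_neg (sub_neg.2 (hg h)) (hD r s h hs)).le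
    · subst h; simp
    · have hD' : 0 < p^(k-r) * q^(k-s) - q^(k-r) * p^(k-s) := by
        have := hD s r h hr; linarith
      exact mul_nonneg (mul_nonneg (hc r hr).le (hc s hs).le)
        (mul_pos (sub_pos.2 (hg h)) hD').le
  have hstrict : 0 < F 0 1 + F 1 0 := by
    rw [hFF 0 1]
    exact mul_pos (mul_pos (hc 0 (by omega)) (hc 1 hk))
      (mul_pos_of_neg_of_neg (sub_neg.2 (hg one_pos)) (hD 0 1 one_pos hk))
  have hpos : 0 < ∑ r ∈ range (k+1), ∑ s ∈ range (k+1), (F r s + F s r) := by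
    apply Finset.sum_pos'
    · intro r hr
      rw [Finset.mem_range] at hr
      refine Finset.sum_nonneg fun s hs => ?_
      rw [Finset.mem_range] at hs
      exact hterm r s (by omega) (by omega)
    · refine ⟨0, Finset.mem_range.2 (by omega), ?_⟩
      apply Finset.sum_pos'
      · intro s hs
        rw [Finset.mem_range] at hs
        exact hterm 0 s (by omega) (by omega)
      · exact ⟨1, Finset.mem_range.2 (by omega), hstrict⟩
  have h2S : (∑ r ∈ range (k+1), ∑ s ∈ range (k+1), F r s) * 2
      = ∑ r ∈ range (k+1), ∑ s ∈ range (k+1), (F r s + F s r) := by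
    rw [mul_two]
    nth_rewrite 2 [Finset.sum_comm]
    rw [← Finset.sum_add_distrib]
    exact Finset.sum_congr rfl fun r _ => (Finset.sum_add_distrib).symm
  have hS : 0 < ∑ r ∈ range (k+1), ∑ s ∈ range (k+1), F r s := by
    nlinarith [hpos, h2S]
  rw [← sub_pos, Finset.sum_mul_sum, Finset.sum_mul_sum, ← Finset.sum_sub_distrib]
  calc (0:ℝ) < ∑ r ∈ range (k+1), ∑ s ∈ range (k+1), F r s := hS
    _ = _ := by
      refine Finset.sum_congr rfl fun r _ => ?_
      rw [← Finset.sum_sub_distrib]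

/-- The left-hand side of the key sufficient inequality (ineqB) in Proposition 4.3,
`δ ↦ ((1/2+δ)/(1+δ))^k Σ_{r=0}^k C(k,r)(1+2δ)^{-r} Γ(l+1/2+r)/Γ(1/2+r)`,
is strictly decreasing in `δ` on `[0, ∞)` for every `l ≥ 1` and `k ≥ 1`. -/
theorem ineqB_lhs_strictAnti (l : ℕ) (hl : 1 ≤ l) (k : ℕ) (hk : 1 ≤ k) :
    StrictAntiOn (fun δ : ℝ =>
      ((1 / 2 + δ) / (1 + δ)) ^ k *
        ∑ r ∈ Finset.range (k + 1), (Nat.choose k r : ℝ) / (1 + 2 * δ) ^ r *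
          (Real.Gamma ((l : ℝ) + 1 / 2 + (r : ℝ)) / Real.Gamma (1 / 2 + (r : ℝ))))
      (Set.Ici 0) := by
  have key : ∀ δ : ℝ, 0 ≤ δ →
      ((1 / 2 + δ) / (1 + δ)) ^ k *
        ∑ r ∈ Finset.range (k + 1), (Nat.choose k r : ℝ) / (1 + 2 * δ) ^ r *
          (Real.Gamma ((l : ℝ) + 1 / 2 + (r : ℝ)) / Real.Gamma (1 / 2 + (r : ℝ)))
      = (∑ r ∈ range (k+1),
          ((Nat.choose k r : ℝ) * (1/2)^r) * gfun l r * (1/2 + δ) ^ (k - r)) / (1 + δ) ^ k := by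
    intro δ hδ
    have h1 : (0:ℝ) < 1/2 + δ := by linarith
    have h2 : (0:ℝ) < 1 + δ := by linarith
    rw [div_pow, div_mul_eq_mul_div]
    congr 1
    rw [Finset.mul_sum]
    refine Finset.sum_congr rfl fun r hr => ?_
    rw [Finset.mem_range] at hr
    have hr' : r ≤ k := by omega
    have e12 : (1 + 2*δ) = 2 * (1/2 + δ) := by ring
    rw [e12, mul_pow, pow_sub₀ _ h1.ne' hr']
    unfold gfun
    simp only [one_div_pow]
    field_simp
  have expand : ∀ δ : ℝ, (1 + δ) ^ k
      = ∑ s ∈ range (k+1), ((Nat.choose k s : ℝ) * (1/2)^s) * (1/2 + δ) ^ (k - s) := by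
    intro δ
    rw [show (1 + δ) = (1/2 : ℝ) + (1/2 + δ) by ring, add_pow]
    exact Finset.sum_congr rfl fun s _ => by ring
  intro x hx y hy hxy
  rw [Set.mem_Ici] at hx hy
  simp only
  rw [key x hx, key y hy, div_lt_div_iff₀ (by positivity) (by positivity), expand x, expand y]
  exact double_sum_lt hk (by linarith : (0:ℝ) < 1/2 + x)
    (by linarith : (1:ℝ)/2 + x < 1/2 + y) (gfun_strictMono l hl) _
    (fun r hr => mul_pos (by exact_mod_cast Nat.choose_pos hr) (by positivity))
end
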